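/- Let 0 < ε⁰ < ε¹, 0 < p < 1, and C > 0, and define L : [0, ∞) → ℝ by L(ρ̂) = C·(1 − p)·(1 − erf(√(ρ̂/(2ε⁰)))) + C·p·erf(√(ρ̂/(2ε¹))), where erf(x) = (2/√π) ∫₀ˣ exp(−t²) dt. (i) If (1 − p)·√ε¹ > p·√ε⁰, then L attains its global minimum over [0, ∞) at the unique point ρ̂* = (2 ε⁰ ε¹/(ε¹ − ε⁰))·( ln((1 − p)/p) + (1/2)·ln(ε¹/ε⁰) ) > 0; that is, L(ρ̂*) ≤ L(ρ̂) for all ρ̂ ≥ 0, with strict inequality for ρ̂ ≠ ρ̂*. (ii) If (1 − p)·√ε¹ ≤ p·√ε⁰, then L is monotone nondecreasing on [0, ∞), so its global minimum over [0, ∞) is attained at ρ̂ = 0. -/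

import Mathlib

/-- The error function `erf x = (2/√π) ∫₀ˣ exp (−t²) dt`. -/
noncomputable def erf (x : ℝ) : ℝ :=
  (2 / Real.sqrt Real.pi) * ∫ t in (0:ℝ)..x, Real.exp (-t ^ 2)

open Real

lemma erf_continuous : Continuous erf := by
  unfold erf
  exact continuous_const.mul
    (intervalIntegral.continuous_primitive
      (fun a b => (Continuous.intervalIntegrable (by continuity)) a b) 0)

lemma erf_hasDerivAt (x : ℝ) :
    HasDerivAt erf (2 / Real.sqrt Real.pi * Real.exp (-x ^ 2)) x := by
  have h : HasDerivAt (fun y => ∫ t in (0:ℝ)..y, Real.exp (-t ^ 2))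
      (Real.exp (-x ^ 2)) x :=
    intervalIntegral.integral_hasDerivAt_right
      ((Continuous.intervalIntegrable (by continuity)) 0 x)
      (Continuous.stronglyMeasurableAtFilter (by continuity) _ _)
      (Continuous.continuousAt (by continuity))
  unfold erf; exact h.const_mul (2 / Real.sqrt Real.pi)

lemma g_hasDerivAt (ε : ℝ) (hε : 0 < ε) {x : ℝ} (hx : 0 < x) :
    HasDerivAt (fun y => erf (Real.sqrt (y / (2 * ε))))
      (Real.exp (-(x / (2 * ε))) / (Real.sqrt Real.pi * Real.sqrt (2 * ε) * Real.sqrt x)) x := by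
  have h2ε : (0:ℝ) < 2 * ε := by linarith
  have hxε : 0 < x / (2 * ε) := div_pos hx h2ε
  have hinner : HasDerivAt (fun y : ℝ => y / (2 * ε)) (1 / (2 * ε)) x := by
    simpa using (hasDerivAt_id x).div_const (2 * ε)
  have hsqrt : HasDerivAt (fun y => Real.sqrt (y / (2 * ε)))
      (1 / (2 * ε) / (2 * Real.sqrt (x / (2 * ε)))) x :=
    hinner.sqrt (ne_of_gt hxε)
  have hcomp := (erf_hasDerivAt (Real.sqrt (x / (2 * ε)))).comp x hsqrt
  refine hcomp.congr_deriv ?_; symm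
  rw [Real.sq_sqrt hxε.le, Real.sqrt_div hx.le]
  have hπ : Real.sqrt Real.pi ≠ 0 := by positivity
  have hs2ε : Real.sqrt (2 * ε) ≠ 0 := by positivity
  have hsx : Real.sqrt x ≠ 0 := by positivity
  have hmul : Real.sqrt (2 * ε) * Real.sqrt (2 * ε) = 2 * ε :=
    Real.mul_self_sqrt h2ε.le
  have h22 : Real.sqrt 2 * Real.sqrt ε * (Real.sqrt 2 * Real.sqrt ε) = 2 * ε := by
    rw [← Real.sqrt_mul (by norm_num) ε]; exact Real.mul_self_sqrt h2ε.le
  field_simp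
  linear_combination -hmul

lemma L_hasDerivAt (ε0 ε1 p C : ℝ) (h0 : 0 < ε0) (h1 : 0 < ε1) {x : ℝ} (hx : 0 < x) :
    HasDerivAt (fun x : ℝ =>
        C * (1 - p) * (1 - erf (Real.sqrt (x / (2 * ε0)))) +
          C * p * erf (Real.sqrt (x / (2 * ε1))))
      (C * p * (Real.exp (-(x / (2 * ε1))) / (Real.sqrt Real.pi * Real.sqrt (2 * ε1) * Real.sqrt x))
        - C * (1 - p) * (Real.exp (-(x / (2 * ε0))) / (Real.sqrt Real.pi * Real.sqrt (2 * ε0) * Real.sqrt x))) x := by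
  have hA := ((g_hasDerivAt ε0 h0 hx).const_sub 1).const_mul (C * (1 - p))
  have hB := (g_hasDerivAt ε1 h1 hx).const_mul (C * p)
  have := hA.add hB
  refine this.congr_deriv ?_; symm
  ring

theorem crossEntropyLoss_global_min
    (ε0 ε1 p C : ℝ) (h0 : 0 < ε0) (h01 : ε0 < ε1) (hp0 : 0 < p) (hp1 : p < 1)
    (hC : 0 < C) :
    ((1 - p) * Real.sqrt ε1 > p * Real.sqrt ε0 →
      0 < (2 * ε0 * ε1 / (ε1 - ε0)) *
          (Real.log ((1 - p) / p) + (1 / 2) * Real.log (ε1 / ε0)) ∧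
      (∀ x : ℝ, 0 ≤ x →
        C * (1 - p) * (1 - erf (Real.sqrt ((2 * ε0 * ε1 / (ε1 - ε0)) *
              (Real.log ((1 - p) / p) + (1 / 2) * Real.log (ε1 / ε0)) / (2 * ε0)))) +
            C * p * erf (Real.sqrt ((2 * ε0 * ε1 / (ε1 - ε0)) *
              (Real.log ((1 - p) / p) + (1 / 2) * Real.log (ε1 / ε0)) / (2 * ε1))) ≤
          C * (1 - p) * (1 - erf (Real.sqrt (x / (2 * ε0)))) +
            C * p * erf (Real.sqrt (x / (2 * ε1)))) ∧
      (∀ x : ℝ, 0 ≤ x →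
        x ≠ (2 * ε0 * ε1 / (ε1 - ε0)) *
            (Real.log ((1 - p) / p) + (1 / 2) * Real.log (ε1 / ε0)) →
        C * (1 - p) * (1 - erf (Real.sqrt ((2 * ε0 * ε1 / (ε1 - ε0)) *
              (Real.log ((1 - p) / p) + (1 / 2) * Real.log (ε1 / ε0)) / (2 * ε0)))) +
            C * p * erf (Real.sqrt ((2 * ε0 * ε1 / (ε1 - ε0)) *
              (Real.log ((1 - p) / p) + (1 / 2) * Real.log (ε1 / ε0)) / (2 * ε1))) <
          C * (1 - p) * (1 - erf (Real.sqrt (x / (2 * ε0)))) +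
            C * p * erf (Real.sqrt (x / (2 * ε1))))) ∧
    ((1 - p) * Real.sqrt ε1 ≤ p * Real.sqrt ε0 →
      MonotoneOn (fun x : ℝ =>
          C * (1 - p) * (1 - erf (Real.sqrt (x / (2 * ε0)))) +
            C * p * erf (Real.sqrt (x / (2 * ε1)))) (Set.Ici 0) ∧
      (∀ x : ℝ, 0 ≤ x →
        C * (1 - p) * (1 - erf (Real.sqrt ((0:ℝ) / (2 * ε0)))) +
            C * p * erf (Real.sqrt ((0:ℝ) / (2 * ε1))) ≤
          C * (1 - p) * (1 - erf (Real.sqrt (x / (2 * ε0)))) +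
            C * p * erf (Real.sqrt (x / (2 * ε1))))) := by
  have h1 : 0 < ε1 := lt_trans h0 h01
  have hd : 0 < ε1 - ε0 := by linarith
  have hq : 0 < 1 - p := by linarith
  set A : ℝ := Real.log ((1 - p) / p) + 1 / 2 * Real.log (ε1 / ε0) with hA_def
  set r : ℝ := 2 * ε0 * ε1 / (ε1 - ε0) * A with hr_def
  set L : ℝ → ℝ := fun x : ℝ =>
      C * (1 - p) * (1 - erf (Real.sqrt (x / (2 * ε0)))) +
        C * p * erf (Real.sqrt (x / (2 * ε1))) with hL_def
  have hK : 0 < 2 * ε0 * ε1 / (ε1 - ε0) := by positivity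
  have hA_eq : A = (Real.log (1 - p) - Real.log p)
      + (1 / 2 * Real.log ε1 - 1 / 2 * Real.log ε0) := by
    rw [hA_def, Real.log_div hq.ne' hp0.ne', Real.log_div h1.ne' h0.ne']; ring
  -- log expansion of the two sides appearing in the derivative sign condition
  have hlog : ∀ q ε x : ℝ, 0 < q → 0 < ε →
      Real.log (q * Real.exp (-(x / (2 * ε))) / Real.sqrt ε)
        = Real.log q - x / (2 * ε) - 1 / 2 * Real.log ε := by
    intro q ε x hqpos hεpos
    rw [Real.log_div (by positivity) (by positivity),
      Real.log_mul hqpos.ne' (Real.exp_ne_zero _), Real.log_exp,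
      Real.log_sqrt hεpos.le]
    ring
  -- the two sign equivalences
  have hx2ε0 : ∀ x : ℝ, x / (2 * ε0) - x / (2 * ε1) = x * (ε1 - ε0) / (2 * ε0 * ε1) := by
    intro x; field_simp
  have hsign : ∀ x : ℝ,
      ((1 - p) * Real.exp (-(x / (2 * ε0))) / Real.sqrt ε0
          < p * Real.exp (-(x / (2 * ε1))) / Real.sqrt ε1 ↔ r < x) ∧
      (p * Real.exp (-(x / (2 * ε1))) / Real.sqrt ε1
          < (1 - p) * Real.exp (-(x / (2 * ε0))) / Real.sqrt ε0 ↔ x < r) := by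
    intro x
    have h1' : r < x ↔ A < x * (ε1 - ε0) / (2 * ε0 * ε1) := by
      rw [hr_def, div_mul_eq_mul_div, div_lt_iff₀ hd,
        lt_div_iff₀ (by positivity : (0:ℝ) < 2 * ε0 * ε1)]
      constructor <;> intro h <;> nlinarith
    have h2' : x < r ↔ x * (ε1 - ε0) / (2 * ε0 * ε1) < A := by
      rw [hr_def, div_mul_eq_mul_div, lt_div_iff₀ hd,
        div_lt_iff₀ (by positivity : (0:ℝ) < 2 * ε0 * ε1)]
      constructor <;> intro h <;> nlinarith
    constructor
    · rw [← Real.log_lt_log_iff (by positivity) (by positivity),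
        hlog (1 - p) ε0 x hq h0, hlog p ε1 x hp0 h1, h1', ← hx2ε0, hA_eq]
      constructor <;> intro h <;> linarith
    · rw [← Real.log_lt_log_iff (by positivity) (by positivity),
        hlog p ε1 x hp0 h1, hlog (1 - p) ε0 x hq h0, h2', ← hx2ε0, hA_eq]
      constructor <;> intro h <;> linarith
  -- rewriting the derivative terms
  have hterm : ∀ q ε : ℝ, 0 < ε → ∀ x : ℝ, 0 < x →
      C * q * (Real.exp (-(x / (2 * ε))) / (Real.sqrt Real.pi * Real.sqrt (2 * ε) * Real.sqrt x))
        = C / (Real.sqrt Real.pi * Real.sqrt 2 * Real.sqrt x)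
            * (q * Real.exp (-(x / (2 * ε))) / Real.sqrt ε) := by
    intro q ε hε x hx
    rw [Real.sqrt_mul (by norm_num : (0:ℝ) ≤ 2) ε]
    have : Real.sqrt Real.pi ≠ 0 := by positivity
    have : Real.sqrt x ≠ 0 := by positivity
    have : Real.sqrt ε ≠ 0 := by positivity
    have : Real.sqrt 2 ≠ 0 := by positivity
    field_simp
  have hc : ∀ x : ℝ, 0 < x → 0 < C / (Real.sqrt Real.pi * Real.sqrt 2 * Real.sqrt x) := by
    intro x hx
    have := Real.pi_pos
    positivity
  -- derivative of L
  have hLD : ∀ x : ℝ, 0 < x → HasDerivAt L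
      (C * p * (Real.exp (-(x / (2 * ε1))) / (Real.sqrt Real.pi * Real.sqrt (2 * ε1) * Real.sqrt x))
        - C * (1 - p) * (Real.exp (-(x / (2 * ε0))) / (Real.sqrt Real.pi * Real.sqrt (2 * ε0) * Real.sqrt x))) x :=
    fun x hx => L_hasDerivAt ε0 ε1 p C h0 h1 hx
  have hDpos : ∀ x : ℝ, 0 < x → r < x →
      0 < C * p * (Real.exp (-(x / (2 * ε1))) / (Real.sqrt Real.pi * Real.sqrt (2 * ε1) * Real.sqrt x))
        - C * (1 - p) * (Real.exp (-(x / (2 * ε0))) / (Real.sqrt Real.pi * Real.sqrt (2 * ε0) * Real.sqrt x)) := by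
    intro x hx hrx
    rw [sub_pos, hterm p ε1 h1 x hx, hterm (1 - p) ε0 h0 x hx]
    exact mul_lt_mul_of_pos_left (((hsign x).1).mpr hrx) (hc x hx)
  have hDneg : ∀ x : ℝ, 0 < x → x < r →
      C * p * (Real.exp (-(x / (2 * ε1))) / (Real.sqrt Real.pi * Real.sqrt (2 * ε1) * Real.sqrt x))
        - C * (1 - p) * (Real.exp (-(x / (2 * ε0))) / (Real.sqrt Real.pi * Real.sqrt (2 * ε0) * Real.sqrt x)) < 0 := by
    intro x hx hxr
    rw [sub_neg, hterm p ε1 h1 x hx, hterm (1 - p) ε0 h0 x hx]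
    exact mul_lt_mul_of_pos_left (((hsign x).2).mpr hxr) (hc x hx)
  -- continuity of L
  have hgcont : ∀ ε : ℝ, Continuous fun x : ℝ => erf (Real.sqrt (x / (2 * ε))) :=
    fun ε => erf_continuous.comp (Real.continuous_sqrt.comp (continuous_id.div_const _))
  have hcont : Continuous L :=
    (continuous_const.mul (continuous_const.sub (hgcont ε0))).add
      (continuous_const.mul (hgcont ε1))
  -- strict monotonicity on [t, ∞) whenever max(0, r) ≤ t
  have hmono : ∀ t : ℝ, 0 ≤ t → r ≤ t → StrictMonoOn L (Set.Ici t) := by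
    intro t ht hrt
    apply strictMonoOn_of_deriv_pos (convex_Ici t) hcont.continuousOn
    intro x hx
    rw [interior_Ici] at hx
    have hx0 : 0 < x := lt_of_le_of_lt ht hx
    rw [(hLD x hx0).deriv]
    exact hDpos x hx0 (lt_of_le_of_lt hrt hx)
  constructor
  · -- case (i)
    intro hgt
    have hApos : 0 < A := by
      have hlt : p * Real.sqrt ε0 < (1 - p) * Real.sqrt ε1 := hgt
      rw [← Real.log_lt_log_iff (by positivity) (by positivity),
        Real.log_mul hp0.ne' (by positivity), Real.log_mul hq.ne' (by positivity),
        Real.log_sqrt h0.le, Real.log_sqrt h1.le] at hlt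
      rw [hA_eq]; linarith
    have hrpos : 0 < r := mul_pos hK hApos
    have hanti : StrictAntiOn L (Set.Icc 0 r) := by
      apply strictAntiOn_of_deriv_neg (convex_Icc 0 r) hcont.continuousOn
      intro x hx
      rw [interior_Icc] at hx
      rw [(hLD x hx.1).deriv]
      exact hDneg x hx.1 hx.2
    have hmono' := hmono r hrpos.le le_rfl
    have hstrict : ∀ x : ℝ, 0 ≤ x → x ≠ r → L r < L x := by
      intro x hx hne
      rcases lt_or_gt_of_ne hne with hlt | hgt'
      · exact hanti ⟨hx, hlt.le⟩ ⟨hrpos.le, le_rfl⟩ hlt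
      · exact hmono' (Set.self_mem_Ici) (Set.mem_Ici.mpr hgt'.le) hgt'
    refine ⟨hrpos, fun x hx => ?_, fun x hx hne => hstrict x hx hne⟩
    by_cases hne : x = r
    · subst hne; exact le_rfl
    · exact (hstrict x hx hne).le
  · -- case (ii)
    intro hle
    have hAle : A ≤ 0 := by
      have hle' : (1 - p) * Real.sqrt ε1 ≤ p * Real.sqrt ε0 := hle
      rcases eq_or_lt_of_le hle' with heq | hlt
      · have := congrArg Real.log heq
        rw [Real.log_mul hq.ne' (by positivity), Real.log_mul hp0.ne' (by positivity),
          Real.log_sqrt h1.le, Real.log_sqrt h0.le] at this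
        rw [hA_eq]; linarith
      · rw [← Real.log_lt_log_iff (by positivity) (by positivity),
          Real.log_mul hq.ne' (by positivity), Real.log_mul hp0.ne' (by positivity),
          Real.log_sqrt h1.le, Real.log_sqrt h0.le] at hlt
        rw [hA_eq]; linarith
    have hrle : r ≤ 0 := mul_nonpos_of_nonneg_of_nonpos hK.le hAle
    have hmono0 := hmono 0 le_rfl hrle
    exact ⟨hmono0.monotoneOn, fun x hx =>
      hmono0.monotoneOn (Set.self_mem_Ici) (Set.mem_Ici.mpr hx) hx⟩
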